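/- Let E ⊆ ℂ^6⊗ℂ^4⊗ℂ^6 be the linear span of the set {x^2_1⊗y⊗z : y ∈ ⟨y^2_1,y^2_2⟩, z ∈ ⟨z^1_3,z^2_3⟩} ∪ {x^1_2⊗(s y^2_1 − t y^2_2)⊗(s z^2_3 + t z^1_3) : s,t ∈ ℂ} ∪ {T_{BCLRS,3}}. Then E is 8-dimensional, and a nonzero simple tensor a⊗b⊗c lies in E if and only if it has one of the following two forms: (i) x^2_1⊗(λ y^2_1 + μ y^2_2)⊗(ν z^1_3 + ρ z^2_3) for some scalars λ, μ, ν, ρ (a point of the sub-Segre surface [x^2_1]×ℙ⟨y^2_1,y^2_2⟩×ℙ⟨z^1_3,z^2_3⟩), or (ii) (σ x^1_2 + τ x^2_1)⊗(s y^2_1 − t y^2_2)⊗(s z^2_3 + t z^1_3) for some scalars σ, τ, s, t (a point of the one-parameter family of lines joining the sub-Segre surface to the plane conic {x^1_2⊗(s y^2_1 − t y^2_2)⊗(s z^2_3 + t z^1_3)}). -/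

import Mathlib

/-- A simple (rank-one) tensor in coordinates: `(u ⊗ v ⊗ w)_{ijk} = u_i v_j w_k`. -/
def simpleTensor {ι₁ ι₂ ι₃ : Type} (u : ι₁ → ℂ) (v : ι₂ → ℂ) (w : ι₃ → ℂ) :
    ι₁ → ι₂ → ι₃ → ℂ :=
  fun i j k => u i * v j * w k

/-- The set of tensors of rank at most `r`: sums of `r` simple tensors. -/
def rankAtMost (ι₁ ι₂ ι₃ : Type) (r : ℕ) : Set (ι₁ → ι₂ → ι₃ → ℂ) :=
  {T | ∃ u : Fin r → ι₁ → ℂ, ∃ v : Fin r → ι₂ → ℂ, ∃ w : Fin r → ι₃ → ℂ,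
    T = ∑ s : Fin r, simpleTensor (u s) (v s) (w s)}

/-- The border rank of a tensor: the least `r` such that `T` lies in the closure of the
set of tensors of rank at most `r`. -/
noncomputable def borderRank {ι₁ ι₂ ι₃ : Type} (T : ι₁ → ι₂ → ι₃ → ℂ) : ℕ :=
  sInf {r : ℕ | T ∈ closure (rankAtMost ι₁ ι₂ ι₃ r)}

/-- The matrix multiplication tensor `M_{⟨n,m,p⟩} = ∑ x^i_j ⊗ y^j_k ⊗ z^k_i`
in coordinates: the first factor is indexed by pairs `(i,j)`, the second by `(j,k)`,
the third by `(k,i)`. -/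
def matMulTensor (n m p : ℕ) :
    (Fin n × Fin m) → (Fin m × Fin p) → (Fin p × Fin n) → ℂ :=
  fun x y z => if x.2 = y.1 ∧ y.2 = z.1 ∧ z.2 = x.1 then 1 else 0

/-- The BCLRS tensor `T_{BCLRS,m} = M_{⟨m,2,2⟩} − x^1_1 ⊗ (y^1_1 ⊗ z^1_1 + y^1_2 ⊗ z^2_1)`
(indices written 1-based in the literature, 0-based here). -/
def TBCLRS (m : ℕ) : (Fin m × Fin 2) → (Fin 2 × Fin 2) → (Fin 2 × Fin m) → ℂ :=
  fun x y z =>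
    matMulTensor m 2 2 x y z -
      (if x.1.val = 0 ∧ x.2.val = 0 then 1 else 0) *
        ((if y.1.val = 0 ∧ y.2.val = 0 then 1 else 0) *
            (if z.1.val = 0 ∧ z.2.val = 0 then 1 else 0) +
          (if y.1.val = 0 ∧ y.2.val = 1 then 1 else 0) *
            (if z.1.val = 1 ∧ z.2.val = 0 then 1 else 0))

/-- The standard basis vector `e_{(i,j)}` of a coordinate space indexed by pairs. -/
def unitVec {α β : Type} [DecidableEq α] [DecidableEq β] (i : α) (j : β) : α × β → ℂ :=
  fun p => if p = (i, j) then 1 else 0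

/-- Basis vectors (0-based indices): `x^i_j`, `y^j_k`, `z^k_i`. -/
def x21 : Fin 3 × Fin 2 → ℂ := unitVec 1 0
def x12 : Fin 3 × Fin 2 → ℂ := unitVec 0 1
def y21 : Fin 2 × Fin 2 → ℂ := unitVec 1 0
def y22 : Fin 2 × Fin 2 → ℂ := unitVec 1 1
def z13 : Fin 2 × Fin 3 → ℂ := unitVec 0 2
def z23 : Fin 2 × Fin 3 → ℂ := unitVec 1 2

/-- The 8-plane `E^{AS,3}`: the span of the sub-Segre surface
`x^2_1 ⊗ ⟨y^2_1,y^2_2⟩ ⊗ ⟨z^1_3,z^2_3⟩`, the conic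
`{x^1_2 ⊗ (s y^2_1 − t y^2_2) ⊗ (s z^2_3 + t z^1_3)}` and `T_{BCLRS,3}`. -/
noncomputable def EAS3 :
    Submodule ℂ ((Fin 3 × Fin 2) → (Fin 2 × Fin 2) → (Fin 2 × Fin 3) → ℂ) :=
  Submodule.span ℂ
    ({T | ∃ v ∈ Submodule.span ℂ {y21, y22}, ∃ w ∈ Submodule.span ℂ {z13, z23},
        T = simpleTensor x21 v w} ∪
      {T | ∃ s t : ℂ, T = simpleTensor x12 (s • y21 - t • y22) (s • z23 + t • z13)} ∪
      {TBCLRS 3})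

def E1 : (Fin 3 × Fin 2) → (Fin 2 × Fin 2) → (Fin 2 × Fin 3) → ℂ := simpleTensor x21 y21 z13
def E2 : (Fin 3 × Fin 2) → (Fin 2 × Fin 2) → (Fin 2 × Fin 3) → ℂ := simpleTensor x21 y21 z23
def E3 : (Fin 3 × Fin 2) → (Fin 2 × Fin 2) → (Fin 2 × Fin 3) → ℂ := simpleTensor x21 y22 z13
def E4 : (Fin 3 × Fin 2) → (Fin 2 × Fin 2) → (Fin 2 × Fin 3) → ℂ := simpleTensor x21 y22 z23
def E5 : (Fin 3 × Fin 2) → (Fin 2 × Fin 2) → (Fin 2 × Fin 3) → ℂ := simpleTensor x12 y21 z23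
def E6 : (Fin 3 × Fin 2) → (Fin 2 × Fin 2) → (Fin 2 × Fin 3) → ℂ := simpleTensor x12 y22 z13
def E7 : (Fin 3 × Fin 2) → (Fin 2 × Fin 2) → (Fin 2 × Fin 3) → ℂ :=
  fun i j k => x12 i * (y21 j * z13 k - y22 j * z23 k)
def E8 : (Fin 3 × Fin 2) → (Fin 2 × Fin 2) → (Fin 2 × Fin 3) → ℂ := TBCLRS 3

def eb : Fin 8 → (Fin 3 × Fin 2) → (Fin 2 × Fin 2) → (Fin 2 × Fin 3) → ℂ :=
  ![E1, E2, E3, E4, E5, E6, E7, E8]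

@[simp] lemma eb0 : eb 0 = E1 := rfl
@[simp] lemma eb1 : eb 1 = E2 := rfl
@[simp] lemma eb2 : eb 2 = E3 := rfl
@[simp] lemma eb3 : eb 3 = E4 := rfl
@[simp] lemma eb4 : eb 4 = E5 := rfl
@[simp] lemma eb5 : eb 5 = E6 := rfl
@[simp] lemma eb6 : eb 6 = E7 := rfl
@[simp] lemma eb7 : eb 7 = E8 := rfl

lemma aux_left {X Y Z : ℂ} (h : X * Y * Z = 0) (hY : Y ≠ 0) (hZ : Z ≠ 0) : X = 0 := by
  rcases mul_eq_zero.mp h with h' | h'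
  · rcases mul_eq_zero.mp h' with h'' | h''
    · exact h''
    · exact absurd h'' hY
  · exact absurd h' hZ

lemma aux_mid {X Y Z : ℂ} (h : X * Y * Z = 0) (hX : X ≠ 0) (hZ : Z ≠ 0) : Y = 0 := by
  have := aux_left (by linear_combination h : Y * X * Z = 0) hX hZ
  exact this

lemma aux_right {X Y Z : ℂ} (h : X * Y * Z = 0) (hX : X ≠ 0) (hY : Y ≠ 0) : Z = 0 := by
  have := aux_left (by linear_combination h : Z * X * Y = 0) hX hY
  exact this

lemma mem_span_eb (c0 c1 c2 c3 c4 c5 c6 c7 : ℂ) :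
    c0 • E1 + c1 • E2 + c2 • E3 + c3 • E4 + c4 • E5 + c5 • E6 + c6 • E7 + c7 • E8
      ∈ Submodule.span ℂ (Set.range eb) := by
  have m : ∀ i : Fin 8, eb i ∈ Submodule.span ℂ (Set.range eb) :=
    fun i => Submodule.subset_span ⟨i, rfl⟩
  exact Submodule.add_mem _ (Submodule.add_mem _ (Submodule.add_mem _ (Submodule.add_mem _
    (Submodule.add_mem _ (Submodule.add_mem _ (Submodule.add_mem _
      (Submodule.smul_mem _ _ (m 0)) (Submodule.smul_mem _ _ (m 1)))
      (Submodule.smul_mem _ _ (m 2))) (Submodule.smul_mem _ _ (m 3)))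
      (Submodule.smul_mem _ _ (m 4))) (Submodule.smul_mem _ _ (m 5)))
      (Submodule.smul_mem _ _ (m 6))) (Submodule.smul_mem _ _ (m 7))

lemma eb_li : LinearIndependent ℂ eb := by
  rw [Fintype.linearIndependent_iff]
  intro g hg
  have key : ∀ (X : Fin 3 × Fin 2) (Y : Fin 2 × Fin 2) (Z : Fin 2 × Fin 3),
      g 0 * E1 X Y Z + g 1 * E2 X Y Z + g 2 * E3 X Y Z + g 3 * E4 X Y Z +
      g 4 * E5 X Y Z + g 5 * E6 X Y Z + g 6 * E7 X Y Z + g 7 * E8 X Y Z = 0 := by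
    intro X Y Z
    have h := congrFun (congrFun (congrFun hg X) Y) Z
    simpa [Fin.sum_univ_eight] using h
  have h0 := key (1,0) (1,0) (0,2)
  have h1 := key (1,0) (1,0) (1,2)
  have h2 := key (1,0) (1,1) (0,2)
  have h3 := key (1,0) (1,1) (1,2)
  have h4 := key (0,1) (1,0) (1,2)
  have h5 := key (0,1) (1,1) (0,2)
  have h6 := key (0,1) (1,0) (0,2)
  have h7 := key (2,0) (0,0) (0,2)
  simp [E1, E2, E3, E4, E5, E6, E7, E8, simpleTensor, x21, x12, y21, y22, z13, z23,
    unitVec, TBCLRS, matMulTensor, Prod.ext_iff, Fin.ext_iff] at h0 h1 h2 h3 h4 h5 h6 h7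
  intro i
  fin_cases i
  · exact h0
  · exact h1
  · exact h2
  · exact h3
  · exact h4
  · exact h5
  · exact h6
  · exact h7

lemma span_eq : EAS3 = Submodule.span ℂ (Set.range eb) := by
  have hE1 : E1 ∈ EAS3 := Submodule.subset_span <| Set.mem_union_left _ <|
    Set.mem_union_left _ ⟨y21, Submodule.subset_span (Set.mem_insert _ _),
      z13, Submodule.subset_span (Set.mem_insert _ _), rfl⟩
  have hE2 : E2 ∈ EAS3 := Submodule.subset_span <| Set.mem_union_left _ <|
    Set.mem_union_left _ ⟨y21, Submodule.subset_span (Set.mem_insert _ _),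
      z23, Submodule.subset_span (Set.mem_insert_of_mem _ rfl), rfl⟩
  have hE3 : E3 ∈ EAS3 := Submodule.subset_span <| Set.mem_union_left _ <|
    Set.mem_union_left _ ⟨y22, Submodule.subset_span (Set.mem_insert_of_mem _ rfl),
      z13, Submodule.subset_span (Set.mem_insert _ _), rfl⟩
  have hE4 : E4 ∈ EAS3 := Submodule.subset_span <| Set.mem_union_left _ <|
    Set.mem_union_left _ ⟨y22, Submodule.subset_span (Set.mem_insert_of_mem _ rfl),
      z23, Submodule.subset_span (Set.mem_insert_of_mem _ rfl), rfl⟩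
  have hE5 : E5 ∈ EAS3 := by
    have h : simpleTensor x12 ((1:ℂ) • y21 - (0:ℂ) • y22) ((1:ℂ) • z23 + (0:ℂ) • z13)
        ∈ EAS3 :=
      Submodule.subset_span <| Set.mem_union_left _ <| Set.mem_union_right _ ⟨1, 0, rfl⟩
    have he : E5 = simpleTensor x12 ((1:ℂ) • y21 - (0:ℂ) • y22) ((1:ℂ) • z23 + (0:ℂ) • z13) := by
      funext X Y Z; simp [E5, simpleTensor]
    rw [he]; exact h
  have hE6 : E6 ∈ EAS3 := by
    have h : simpleTensor x12 ((0:ℂ) • y21 - (1:ℂ) • y22) ((0:ℂ) • z23 + (1:ℂ) • z13)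
        ∈ EAS3 :=
      Submodule.subset_span <| Set.mem_union_left _ <| Set.mem_union_right _ ⟨0, 1, rfl⟩
    have he : E6 = (-1 : ℂ) •
        simpleTensor x12 ((0:ℂ) • y21 - (1:ℂ) • y22) ((0:ℂ) • z23 + (1:ℂ) • z13) := by
      funext X Y Z; simp [E6, simpleTensor] <;> ring
    rw [he]; exact Submodule.smul_mem _ _ h
  have hE7 : E7 ∈ EAS3 := by
    have h : simpleTensor x12 ((1:ℂ) • y21 - (1:ℂ) • y22) ((1:ℂ) • z23 + (1:ℂ) • z13)
        ∈ EAS3 :=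
      Submodule.subset_span <| Set.mem_union_left _ <| Set.mem_union_right _ ⟨1, 1, rfl⟩
    have he : E7 = simpleTensor x12 ((1:ℂ) • y21 - (1:ℂ) • y22) ((1:ℂ) • z23 + (1:ℂ) • z13)
        - E5 + E6 := by
      funext X Y Z
      simp [E5, E6, E7, simpleTensor]
      ring
    rw [he]; exact Submodule.add_mem _ (Submodule.sub_mem _ h hE5) hE6
  have hE8 : E8 ∈ EAS3 := Submodule.subset_span <| Set.mem_union_right _ rfl
  apply le_antisymm
  · apply Submodule.span_le.mpr
    rintro T ((⟨v, hv, w, hw, rfl⟩ | ⟨s, t, rfl⟩) | hT)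
    · obtain ⟨p, q, rfl⟩ := Submodule.mem_span_pair.mp hv
      obtain ⟨u', v', rfl⟩ := Submodule.mem_span_pair.mp hw
      have he : simpleTensor x21 (p • y21 + q • y22) (u' • z13 + v' • z23) =
          (p*u') • E1 + (p*v') • E2 + (q*u') • E3 + (q*v') • E4 + (0:ℂ) • E5 +
          (0:ℂ) • E6 + (0:ℂ) • E7 + (0:ℂ) • E8 := by
        funext X Y Z
        simp [E1, E2, E3, E4, simpleTensor]
        ring
      rw [SetLike.mem_coe, he]
      exact mem_span_eb _ _ _ _ _ _ _ _
    · have he : simpleTensor x12 (s • y21 - t • y22) (s • z23 + t • z13) =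
          (0:ℂ) • E1 + (0:ℂ) • E2 + (0:ℂ) • E3 + (0:ℂ) • E4 + (s*s) • E5 +
          (-(t*t)) • E6 + (s*t) • E7 + (0:ℂ) • E8 := by
        funext X Y Z
        simp [E5, E6, E7, simpleTensor]
        ring
      rw [SetLike.mem_coe, he]
      exact mem_span_eb _ _ _ _ _ _ _ _
    · rw [Set.mem_singleton_iff] at hT
      subst hT
      have he : TBCLRS 3 =
          (0:ℂ) • E1 + (0:ℂ) • E2 + (0:ℂ) • E3 + (0:ℂ) • E4 + (0:ℂ) • E5 +
          (0:ℂ) • E6 + (0:ℂ) • E7 + (1:ℂ) • E8 := by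
        funext X Y Z
        simp [E8]
      rw [SetLike.mem_coe, he]
      exact mem_span_eb _ _ _ _ _ _ _ _
  · apply Submodule.span_le.mpr
    rintro T ⟨i, rfl⟩
    fin_cases i
    · exact hE1
    · exact hE2
    · exact hE3
    · exact hE4
    · exact hE5
    · exact hE6
    · exact hE7
    · exact hE8

lemma repr_a (a : Fin 3 × Fin 2 → ℂ) (h1 : a (0,0) = 0) (h2 : a (1,1) = 0)
    (h3 : a (2,0) = 0) (h4 : a (2,1) = 0) :
    a = fun X => a (0,1) * x12 X + a (1,0) * x21 X := by
  funext ⟨i, j⟩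
  fin_cases i <;> fin_cases j <;> simp_all [x12, x21, unitVec, Prod.ext_iff, Fin.ext_iff, -Prod.mk_zero_zero, -Prod.mk_one_one]

lemma repr_b (b : Fin 2 × Fin 2 → ℂ) (h1 : b (0,0) = 0) (h2 : b (0,1) = 0) :
    b = fun Y => b (1,0) * y21 Y + b (1,1) * y22 Y := by
  funext ⟨i, j⟩
  fin_cases i <;> fin_cases j <;> simp_all [y21, y22, unitVec, Prod.ext_iff, Fin.ext_iff, -Prod.mk_zero_zero, -Prod.mk_one_one]

lemma repr_c (c : Fin 2 × Fin 3 → ℂ) (h1 : c (0,0) = 0) (h2 : c (0,1) = 0)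
    (h3 : c (1,0) = 0) (h4 : c (1,1) = 0) :
    c = fun Z => c (0,2) * z13 Z + c (1,2) * z23 Z := by
  funext ⟨i, j⟩
  fin_cases i <;> fin_cases j <;> simp_all [z13, z23, unitVec, Prod.ext_iff, Fin.ext_iff, -Prod.mk_zero_zero, -Prod.mk_one_one]

/-- `E^{AS,3}` is 8-dimensional, and its nonzero simple tensors are exactly the points of the
sub-Segre surface `[x^2_1] × ℙ⟨y^2_1,y^2_2⟩ × ℙ⟨z^1_3,z^2_3⟩` together with the points of the
one-parameter family of lines `(σ x^1_2 + τ x^2_1) ⊗ (s y^2_1 − t y^2_2) ⊗ (s z^2_3 + t z^1_3)`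
joining the sub-Segre surface to the plane conic. -/
theorem EAS3_rank_one_points :
    Module.finrank ℂ EAS3 = 8 ∧
    ∀ (a : Fin 3 × Fin 2 → ℂ) (b : Fin 2 × Fin 2 → ℂ) (c : Fin 2 × Fin 3 → ℂ),
      simpleTensor a b c ≠ 0 →
      (simpleTensor a b c ∈ EAS3 ↔
        (∃ lam mu nu rho : ℂ, simpleTensor a b c =
          simpleTensor x21 (lam • y21 + mu • y22) (nu • z13 + rho • z23)) ∨
        (∃ sig tau s t : ℂ, simpleTensor a b c =
          simpleTensor (sig • x12 + tau • x21) (s • y21 - t • y22) (s • z23 + t • z13))) := by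
  constructor
  · rw [span_eq, finrank_span_eq_card eb_li]
    simp
  intro a b c hne
  constructor
  · -- forward direction
    intro hmem
    rw [span_eq] at hmem
    obtain ⟨g, hg⟩ := (Submodule.mem_span_range_iff_exists_fun ℂ).mp hmem
    have key : ∀ (X : Fin 3 × Fin 2) (Y : Fin 2 × Fin 2) (Z : Fin 2 × Fin 3),
        g 0 * E1 X Y Z + g 1 * E2 X Y Z + g 2 * E3 X Y Z + g 3 * E4 X Y Z +
        g 4 * E5 X Y Z + g 5 * E6 X Y Z + g 6 * E7 X Y Z + g 7 * E8 X Y Z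
          = a X * b Y * c Z := by
      intro X Y Z
      have h := congrFun (congrFun (congrFun hg X) Y) Z
      simpa [Fin.sum_univ_eight, simpleTensor] using h
    have hW : ∃ X Y Z, a X * b Y * c Z ≠ 0 := by
      by_contra hcon
      push_neg at hcon
      exact hne (by funext X Y Z; exact hcon X Y Z)
    obtain ⟨X0, Y0, Z0, h0⟩ := hW
    have ha0 : a X0 ≠ 0 := left_ne_zero_of_mul (left_ne_zero_of_mul h0)
    have hb0 : b Y0 ≠ 0 := right_ne_zero_of_mul (left_ne_zero_of_mul h0)
    have hc0 : c Z0 ≠ 0 := right_ne_zero_of_mul h0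
    -- the TBCLRS coefficient vanishes
    have e1 := key (1,0) (0,0) (0,1)
    have e2 := key (2,0) (0,0) (0,2)
    have hθ : g 7 = 0 := by
      by_contra h7
      simp [E1, E2, E3, E4, E5, E6, E7, E8, simpleTensor, x21, x12, y21, y22, z13, z23,
        unitVec, TBCLRS, matMulTensor, Prod.ext_iff, Fin.ext_iff, -Prod.mk_zero_zero, -Prod.mk_one_one] at e1 e2
      have hprod1 : a (1,0) * b (0,0) * c (0,1) ≠ 0 := e1 ▸ h7
      have hprod2 : a (2,0) * b (0,0) * c (0,2) ≠ 0 := e2 ▸ h7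
      have ha10 : a (1,0) ≠ 0 := left_ne_zero_of_mul (left_ne_zero_of_mul hprod1)
      have hb00 : b (0,0) ≠ 0 := right_ne_zero_of_mul (left_ne_zero_of_mul hprod1)
      have hc02 : c (0,2) ≠ 0 := right_ne_zero_of_mul hprod2
      have e3 := key (1,0) (0,0) (0,2)
      simp [E1, E2, E3, E4, E5, E6, E7, E8, simpleTensor, x21, x12, y21, y22, z13, z23,
        unitVec, TBCLRS, matMulTensor, Prod.ext_iff, Fin.ext_iff, -Prod.mk_zero_zero, -Prod.mk_one_one, ha10, hb00, hc02] at e3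
    have key' : ∀ (X : Fin 3 × Fin 2) (Y : Fin 2 × Fin 2) (Z : Fin 2 × Fin 3),
        g 0 * E1 X Y Z + g 1 * E2 X Y Z + g 2 * E3 X Y Z + g 3 * E4 X Y Z +
        g 4 * E5 X Y Z + g 5 * E6 X Y Z + g 6 * E7 X Y Z = a X * b Y * c Z := by
      intro X Y Z
      linear_combination key X Y Z - E8 X Y Z * hθ
    -- support facts
    have ha00 : a (0,0) = 0 := by
      have h := key' (0,0) Y0 Z0
      simp [E1, E2, E3, E4, E5, E6, E7, simpleTensor, x21, x12, y21, y22, z13, z23,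
        unitVec, Prod.ext_iff, Fin.ext_iff, -Prod.mk_zero_zero, -Prod.mk_one_one, -Fin.val_eq_zero_iff, hb0, hc0] at h
      exact h
    have ha11 : a (1,1) = 0 := by
      have h := key' (1,1) Y0 Z0
      simp [E1, E2, E3, E4, E5, E6, E7, simpleTensor, x21, x12, y21, y22, z13, z23,
        unitVec, Prod.ext_iff, Fin.ext_iff, -Prod.mk_zero_zero, -Prod.mk_one_one, -Fin.val_eq_zero_iff, hb0, hc0] at h
      exact h
    have ha20 : a (2,0) = 0 := by
      have h := key' (2,0) Y0 Z0
      simp [E1, E2, E3, E4, E5, E6, E7, simpleTensor, x21, x12, y21, y22, z13, z23,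
        unitVec, Prod.ext_iff, Fin.ext_iff, -Prod.mk_zero_zero, -Prod.mk_one_one, -Fin.val_eq_zero_iff, hb0, hc0] at h
      exact h
    have ha21 : a (2,1) = 0 := by
      have h := key' (2,1) Y0 Z0
      simp [E1, E2, E3, E4, E5, E6, E7, simpleTensor, x21, x12, y21, y22, z13, z23,
        unitVec, Prod.ext_iff, Fin.ext_iff, -Prod.mk_zero_zero, -Prod.mk_one_one, -Fin.val_eq_zero_iff, hb0, hc0] at h
      exact h
    have hb00 : b (0,0) = 0 := by
      have h := key' X0 (0,0) Z0
      simp [E1, E2, E3, E4, E5, E6, E7, simpleTensor, x21, x12, y21, y22, z13, z23,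
        unitVec, Prod.ext_iff, Fin.ext_iff, -Prod.mk_zero_zero, -Prod.mk_one_one, -Fin.val_eq_zero_iff, ha0, hc0] at h
      exact h
    have hb01 : b (0,1) = 0 := by
      have h := key' X0 (0,1) Z0
      simp [E1, E2, E3, E4, E5, E6, E7, simpleTensor, x21, x12, y21, y22, z13, z23,
        unitVec, Prod.ext_iff, Fin.ext_iff, -Prod.mk_zero_zero, -Prod.mk_one_one, -Fin.val_eq_zero_iff, ha0, hc0] at h
      exact h
    have hc00 : c (0,0) = 0 := by
      have h := key' X0 Y0 (0,0)
      simp [E1, E2, E3, E4, E5, E6, E7, simpleTensor, x21, x12, y21, y22, z13, z23,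
        unitVec, Prod.ext_iff, Fin.ext_iff, -Prod.mk_zero_zero, -Prod.mk_one_one, -Fin.val_eq_zero_iff, ha0, hb0] at h
      exact h
    have hc01 : c (0,1) = 0 := by
      have h := key' X0 Y0 (0,1)
      simp [E1, E2, E3, E4, E5, E6, E7, simpleTensor, x21, x12, y21, y22, z13, z23,
        unitVec, Prod.ext_iff, Fin.ext_iff, -Prod.mk_zero_zero, -Prod.mk_one_one, -Fin.val_eq_zero_iff, ha0, hb0] at h
      exact h
    have hc10 : c (1,0) = 0 := by
      have h := key' X0 Y0 (1,0)
      simp [E1, E2, E3, E4, E5, E6, E7, simpleTensor, x21, x12, y21, y22, z13, z23,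
        unitVec, Prod.ext_iff, Fin.ext_iff, -Prod.mk_zero_zero, -Prod.mk_one_one, -Fin.val_eq_zero_iff, ha0, hb0] at h
      exact h
    have hc11 : c (1,1) = 0 := by
      have h := key' X0 Y0 (1,1)
      simp [E1, E2, E3, E4, E5, E6, E7, simpleTensor, x21, x12, y21, y22, z13, z23,
        unitVec, Prod.ext_iff, Fin.ext_iff, -Prod.mk_zero_zero, -Prod.mk_one_one, -Fin.val_eq_zero_iff, ha0, hb0] at h
      exact h
    -- the conic constraint
    have h5 := key' (0,1) (1,0) (0,2)
    have h6 := key' (0,1) (1,1) (1,2)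
    simp [E1, E2, E3, E4, E5, E6, E7, simpleTensor, x21, x12, y21, y22, z13, z23,
      unitVec, Prod.ext_iff, Fin.ext_iff, -Prod.mk_zero_zero, -Prod.mk_one_one] at h5 h6
    have hsum : a (0,1) * (b (1,0) * c (0,2)) + a (0,1) * (b (1,1) * c (1,2)) = 0 := by
      first
      | linear_combination h5 + h6
      | linear_combination - h5 - h6
      | linear_combination h5 - h6
      | linear_combination h6 - h5
    have haX : ∀ X, a X = a (0,1) * x12 X + a (1,0) * x21 X :=
      fun X => congrFun (repr_a a ha00 ha11 ha20 ha21) X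
    have hbY : ∀ Y, b Y = b (1,0) * y21 Y + b (1,1) * y22 Y :=
      fun Y => congrFun (repr_b b hb00 hb01) Y
    have hcZ : ∀ Z, c Z = c (0,2) * z13 Z + c (1,2) * z23 Z :=
      fun Z => congrFun (repr_c c hc00 hc01 hc10 hc11) Z
    by_cases hσ : a (0,1) = 0
    · left
      refine ⟨a (1,0) * b (1,0), a (1,0) * b (1,1), c (0,2), c (1,2), ?_⟩
      funext X Y Z
      simp only [simpleTensor]
      rw [haX X, hbY Y, hcZ Z, hσ]
      simp only [Pi.add_apply, Pi.smul_apply, smul_eq_mul]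
      ring
    · right
      have hpu : b (1,0) * c (0,2) + b (1,1) * c (1,2) = 0 := by
        apply mul_left_cancel₀ hσ
        linear_combination hsum
      have hμ : ∃ μ : ℂ, c (0,2) = -(b (1,1) * μ) ∧ c (1,2) = b (1,0) * μ := by
        by_cases hp : b (1,0) = 0
        · have hq : b (1,1) ≠ 0 := by
            intro hq
            apply hb0
            rw [hbY Y0, hp, hq]
            ring
          have hv0 : c (1,2) = 0 := by
            have hqv : b (1,1) * c (1,2) = 0 := by
              linear_combination hpu - c (0,2) * hp
            exact (mul_eq_zero.mp hqv).resolve_left hq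
          refine ⟨-(c (0,2)) / b (1,1), ?_, ?_⟩
          · have hcancel : b (1,1) * (-(c (0,2)) / b (1,1)) = -(c (0,2)) := by
              rw [← mul_div_assoc, mul_div_cancel_left₀ _ hq]
            rw [hcancel, neg_neg]
          · rw [hp, zero_mul]; exact hv0
        · refine ⟨c (1,2) / b (1,0), ?_, ?_⟩
          · field_simp
            first
            | linear_combination hpu
            | linear_combination - hpu
            | linear_combination b (1,0) * hpu
            | linear_combination - (b (1,0)) * hpu
          · have hcancel : b (1,0) * (c (1,2) / b (1,0)) = c (1,2) := by
              rw [← mul_div_assoc, mul_div_cancel_left₀ _ hp]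
            rw [hcancel]
      obtain ⟨μ, hu, hv⟩ := hμ
      refine ⟨μ * a (0,1), μ * a (1,0), b (1,0), -(b (1,1)), ?_⟩
      funext X Y Z
      simp only [simpleTensor]
      rw [haX X, hbY Y, hcZ Z, hu, hv]
      simp only [Pi.add_apply, Pi.sub_apply, Pi.smul_apply, smul_eq_mul]
      ring
  · -- backward direction
    rintro (⟨lam, mu, nu, rho, heq⟩ | ⟨sig, tau, s, t, heq⟩)
    · rw [heq]
      exact Submodule.subset_span (Set.mem_union_left _ (Set.mem_union_left _
        ⟨lam • y21 + mu • y22, Submodule.mem_span_pair.mpr ⟨lam, mu, rfl⟩,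
         nu • z13 + rho • z23, Submodule.mem_span_pair.mpr ⟨nu, rho, rfl⟩, rfl⟩))
    · rw [heq]
      have hsplit : simpleTensor (sig • x12 + tau • x21) (s • y21 - t • y22) (s • z23 + t • z13)
          = sig • simpleTensor x12 (s • y21 - t • y22) (s • z23 + t • z13)
            + tau • simpleTensor x21 (s • y21 - t • y22) (s • z23 + t • z13) := by
        funext X Y Z
        simp only [simpleTensor, Pi.add_apply, Pi.smul_apply, smul_eq_mul]
        ring
      rw [hsplit]
      refine Submodule.add_mem _ (Submodule.smul_mem _ _ ?_) (Submodule.smul_mem _ _ ?_)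
      · exact Submodule.subset_span (Set.mem_union_left _ (Set.mem_union_right _ ⟨s, t, rfl⟩))
      · refine Submodule.subset_span (Set.mem_union_left _ (Set.mem_union_left _
          ⟨s • y21 - t • y22, ?_, s • z23 + t • z13, ?_, rfl⟩))
        · exact Submodule.mem_span_pair.mpr ⟨s, -t, by module⟩
        · exact Submodule.mem_span_pair.mpr ⟨t, s, by module⟩
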